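/- Let x_1, \ldots, x_n be T-pairs (positive or negative) for a Belavin-Drinfeld triple, and suppose the matrix product E_{x_1} \cdots E_{x_n} is nonzero. Then it equals E_z for a unique z \in \bar\Gamma \times \bar\Gamma, namely the componentwise sum of all the x_i; in particular, the componentwise sum is never (0,0), so the product is never of the form e_{ii} \otimes e_{jj}. -/

import Mathlib

/-- Adjacency of simple roots `α_i`, `α_j` of `sl(n)` (equivalent to
`(α_i, α_j) = -1`): the indices differ by one. -/
def Adj (i j : ℕ) : Prop := i + 1 = j ∨ j + 1 = i

/-- One application of the additive extension of `T` to positive roots.  A positive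
root `e_i - e_j` (`i < j`) is encoded as the pair `(i, j)`; its simple-root support is
`Finset.Ico i j`.  `TStep T Γ1 α β` says that all simple constituents of `α` lie in
`Γ1` and that `T` maps the support of `α` onto the support of `β` (possibly reversing
orientation), i.e. `T α = β`. -/
def TStep (T : ℕ → ℕ) (Γ1 : Finset ℕ) (α β : ℕ × ℕ) : Prop :=
  α.1 < α.2 ∧ β.1 < β.2 ∧ Finset.Ico α.1 α.2 ⊆ Γ1 ∧
    Finset.image T (Finset.Ico α.1 α.2) = Finset.Ico β.1 β.2

/-- `TIter T Γ1 k α β` says `T^k α = β` for positive roots `α`, `β`. -/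
def TIter (T : ℕ → ℕ) (Γ1 : Finset ℕ) : ℕ → ℕ × ℕ → ℕ × ℕ → Prop
  | 0, α, β => α = β
  | k + 1, α, β => ∃ γ, TStep T Γ1 α γ ∧ TIter T Γ1 k γ β

/-- A Belavin–Drinfeld triple of type `A_{n-1}`: `Γ1, Γ2` are subsets of the simple
roots `{1, …, n-1}` of `sl(n)`, `T` restricts to a bijection `Γ1 → Γ2` preserving the
inner product (equivalently, preserving adjacency), and `T` is nilpotent. -/
def BDTriple (n : ℕ) (Γ1 Γ2 : Finset ℕ) (T : ℕ → ℕ) : Prop :=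
  Γ1 ⊆ Finset.Ico 1 n ∧ Γ2 ⊆ Finset.Ico 1 n ∧
    Set.BijOn T ↑Γ1 ↑Γ2 ∧
    (∀ i ∈ Γ1, ∀ j ∈ Γ1, (Adj (T i) (T j) ↔ Adj i j)) ∧
    (∀ i ∈ Γ1, ∃ k, 1 ≤ k ∧ T^[k] i ∉ Γ1)

open Matrix Kronecker

/-- A `T`-pair for a Belavin–Drinfeld triple: the data of a positive root `α` (with
`1 ≤ α.1 < α.2 ≤ n`) and `β = T^k α`.  If `pos = true` this encodes the positive
`T`-pair `(T^k α, -α)` (requiring `k > 0`); if `pos = false` it encodes the negative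
`T`-pair `(-α, T^k α)` (allowing `k = 0`).  `Ord = k` and the size is `|α| = α.2 - α.1`. -/
structure TPair (n : ℕ) (T : ℕ → ℕ) (Γ1 : Finset ℕ) where
  pos : Bool
  k : ℕ
  α : ℕ × ℕ
  β : ℕ × ℕ
  hα : α.1 < α.2
  hlo : 1 ≤ α.1 ∧ 1 ≤ β.1
  hhi : α.2 ≤ n ∧ β.2 ≤ n
  hiter : TIter T Γ1 k α β
  hpos : pos = true → 0 < k

open Fin.NatCast in
/-- The elementary matrix `e_{e_i - e_j} = e_{ij}` attached to a root `e_i - e_j`,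
encoded as the pair `(i, j)` with `1 ≤ i, j ≤ n` (indices taken in `Fin (n+1)`). -/
noncomputable def Eroot (n : ℕ) (p : ℕ × ℕ) : Matrix (Fin (n + 1)) (Fin (n + 1)) ℂ :=
  single (p.1 : Fin (n + 1)) (p.2 : Fin (n + 1)) 1

/-- The elementary tensor `E_x` attached to a `T`-pair `x`: for a positive pair
`(β, -α)` it is `e_β ⊗ e_{-α}`, and for a negative pair `(-α, β)` it is
`e_{-α} ⊗ e_β`, where `e_{-(e_i - e_j)} = e_{ji}`. -/
noncomputable def Epair {n : ℕ} {T : ℕ → ℕ} {Γ1 : Finset ℕ} (x : TPair n T Γ1) :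
    Matrix (Fin (n + 1) × Fin (n + 1)) (Fin (n + 1) × Fin (n + 1)) ℂ :=
  if x.pos then Eroot n x.β ⊗ₖ Eroot n (x.α.2, x.α.1)
  else Eroot n (x.α.2, x.α.1) ⊗ₖ Eroot n x.β

/-- First component of a `T`-pair, as a (possibly negative) root `e_{p.1} - e_{p.2}`. -/
def comp1 {n : ℕ} {T : ℕ → ℕ} {Γ1 : Finset ℕ} (x : TPair n T Γ1) : ℕ × ℕ :=
  if x.pos then x.β else (x.α.2, x.α.1)

/-- Second component of a `T`-pair, as a (possibly negative) root `e_{p.1} - e_{p.2}`. -/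
def comp2 {n : ℕ} {T : ℕ → ℕ} {Γ1 : Finset ℕ} (x : TPair n T Γ1) : ℕ × ℕ :=
  if x.pos then (x.α.2, x.α.1) else x.β

namespace BDAux

open Matrix Kronecker

open Classical in
noncomputable def Nf (T : ℕ → ℕ) (Γ1 : Finset ℕ) (s : ℕ) : ℕ :=
  if h : ∃ k, T^[k] s ∉ Γ1 then Nat.find h else 0

noncomputable def psi (T : ℕ → ℕ) (Γ1 : Finset ℕ) (i : ℕ) : ℤ :=
  -∑ s ∈ Finset.range i, (Nf T Γ1 s : ℤ)

lemma Nf_exists {T : ℕ → ℕ} {Γ1 : Finset ℕ}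
    (hnil : ∀ i ∈ Γ1, ∃ k, 1 ≤ k ∧ T^[k] i ∉ Γ1) (s : ℕ) :
    ∃ k, T^[k] s ∉ Γ1 := by
  by_cases hs : s ∈ Γ1
  · obtain ⟨k, _, hk⟩ := hnil s hs; exact ⟨k, hk⟩
  · exact ⟨0, hs⟩

lemma Nf_step {T : ℕ → ℕ} {Γ1 : Finset ℕ}
    (hnil : ∀ i ∈ Γ1, ∃ k, 1 ≤ k ∧ T^[k] i ∉ Γ1) {s : ℕ} (hs : s ∈ Γ1) :
    Nf T Γ1 (T s) + 1 ≤ Nf T Γ1 s := by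
  have h1 := Nf_exists hnil s
  have h2 := Nf_exists hnil (T s)
  simp only [Nf]
  rw [dif_pos h1, dif_pos h2]
  have hfs : T^[Nat.find h1] s ∉ Γ1 := Nat.find_spec h1
  have hpos : 0 < Nat.find h1 := by
    rcases Nat.eq_zero_or_pos (Nat.find h1) with h | h
    · rw [h] at hfs; exact absurd hs hfs
    · exact h
  have hh : T^[Nat.find h1 - 1] (T s) ∉ Γ1 := by
    have h3 : T^[Nat.find h1 - 1 + 1] s ∉ Γ1 := by rwa [Nat.sub_add_cancel hpos]
    rwa [Function.iterate_succ_apply] at h3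
  have := Nat.find_min' h2 hh
  omega

lemma TStep_facts {T : ℕ → ℕ} {Γ1 : Finset ℕ}
    (hinj : Set.InjOn T ↑Γ1)
    (hnil : ∀ i ∈ Γ1, ∃ k, 1 ≤ k ∧ T^[k] i ∉ Γ1) {α β : ℕ × ℕ}
    (h : TStep T Γ1 α β) :
    β.1 < β.2 ∧ ((β.2 : ℤ) - β.1 = (α.2 : ℤ) - α.1) ∧
      psi T Γ1 α.2 - psi T Γ1 α.1 + ((α.2 : ℤ) - α.1) ≤ psi T Γ1 β.2 - psi T Γ1 β.1 := by
  obtain ⟨hα, hβ, hsub, himg⟩ := h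
  have hinj' : ∀ x ∈ Finset.Ico α.1 α.2, ∀ y ∈ Finset.Ico α.1 α.2, T x = T y → x = y := by
    intro a ha b hb hab
    exact hinj (by exact_mod_cast hsub ha) (by exact_mod_cast hsub hb) hab
  have hcard : (Finset.Ico β.1 β.2).card = (Finset.Ico α.1 α.2).card := by
    rw [← himg, Finset.card_image_of_injOn hinj']
  rw [Nat.card_Ico, Nat.card_Ico] at hcard
  refine ⟨hβ, by omega, ?_⟩
  have key : ∀ a b : ℕ, a ≤ b →
      psi T Γ1 b - psi T Γ1 a = -∑ s ∈ Finset.Ico a b, (Nf T Γ1 s : ℤ) := by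
    intro a b hab
    unfold psi
    rw [Finset.sum_Ico_eq_sub _ hab]
    ring
  rw [key _ _ hα.le, key _ _ hβ.le]
  have hsum : ∑ s ∈ Finset.Ico β.1 β.2, (Nf T Γ1 s : ℤ)
      = ∑ s ∈ Finset.Ico α.1 α.2, (Nf T Γ1 (T s) : ℤ) := by
    rw [← himg, Finset.sum_image hinj']
  rw [hsum]
  have hle : ∀ s ∈ Finset.Ico α.1 α.2, (Nf T Γ1 (T s) : ℤ) ≤ (Nf T Γ1 s : ℤ) - 1 := by
    intro s hsm
    have := Nf_step hnil (hsub hsm)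
    omega
  have hs2 := Finset.sum_le_sum hle
  rw [Finset.sum_sub_distrib, Finset.sum_const, Nat.card_Ico, nsmul_eq_mul, mul_one] at hs2
  have hc : ((α.2 - α.1 : ℕ) : ℤ) = (α.2 : ℤ) - α.1 := by omega
  rw [hc] at hs2
  linarith

lemma TIter_facts {T : ℕ → ℕ} {Γ1 : Finset ℕ}
    (hinj : Set.InjOn T ↑Γ1)
    (hnil : ∀ i ∈ Γ1, ∃ k, 1 ≤ k ∧ T^[k] i ∉ Γ1) :
    ∀ (k : ℕ) {α β : ℕ × ℕ}, TIter T Γ1 k α β → α.1 < α.2 →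
    β.1 < β.2 ∧ ((β.2 : ℤ) - β.1 = (α.2 : ℤ) - α.1) ∧
      psi T Γ1 α.2 - psi T Γ1 α.1 + k * ((α.2 : ℤ) - α.1)
        ≤ psi T Γ1 β.2 - psi T Γ1 β.1 := by
  intro k
  induction k with
  | zero =>
    intro α β hit hα
    have hab : α = β := hit
    subst hab
    exact ⟨hα, rfl, by simp⟩
  | succ j ih =>
    intro α β hit hα
    obtain ⟨γ, h1, h2⟩ := hit
    obtain ⟨hγ, hsz, hψ⟩ := TStep_facts hinj hnil h1
    obtain ⟨hβ, hsz2, hψ2⟩ := ih h2 hγ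
    refine ⟨hβ, by omega, ?_⟩
    rw [hsz] at hψ2
    push_cast
    linarith

lemma kron_ofFn_prod {N : ℕ} :
    ∀ (m : ℕ) (A B : Fin m → Matrix (Fin N) (Fin N) ℂ),
    (List.ofFn fun i => A i ⊗ₖ B i).prod = (List.ofFn A).prod ⊗ₖ (List.ofFn B).prod := by
  intro m
  induction m with
  | zero => intro A B; simp [Matrix.one_kronecker_one]
  | succ k ih =>
    intro A B
    rw [List.ofFn_succ, List.ofFn_succ (f := A), List.ofFn_succ (f := B)]
    simp only [List.prod_cons]
    rw [ih, Matrix.mul_kronecker_mul]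

lemma chain_lemma {I : Type*} [Fintype I] [DecidableEq I] :
    ∀ (m : ℕ) (hm : 0 < m) (g : Fin m → I × I),
    (List.ofFn fun i => single (g i).1 (g i).2 (1 : ℂ)).prod ≠ 0 →
    (List.ofFn fun i => single (g i).1 (g i).2 (1 : ℂ)).prod
      = single (g ⟨0, hm⟩).1 (g ⟨m - 1, Nat.sub_lt hm Nat.one_pos⟩).2 1 ∧
    ∀ i (hi : i + 1 < m), (g ⟨i, Nat.lt_of_succ_lt hi⟩).2 = (g ⟨i + 1, hi⟩).1 := by
  intro m
  induction m with
  | zero => intro hm; exact absurd hm (lt_irrefl 0)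
  | succ k ih =>
    intro hm g hne
    cases k with
    | zero =>
      refine ⟨?_, ?_⟩
      · simp [List.ofFn_succ]
      · intro i hi; omega
    | succ k' =>
      have hrw : (List.ofFn fun i : Fin (k' + 2) => single (g i).1 (g i).2 (1 : ℂ))
          = single (g ⟨0, hm⟩).1 (g ⟨0, hm⟩).2 1
            :: (List.ofFn fun i : Fin (k' + 1) =>
              single (g i.succ).1 (g i.succ).2 (1 : ℂ)) := by
        rw [List.ofFn_succ]; rfl
      rw [hrw, List.prod_cons] at hne ⊢
      have hrest : (List.ofFn fun i : Fin (k' + 1) =>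
          single (g i.succ).1 (g i.succ).2 (1 : ℂ)).prod ≠ 0 := by
        intro h0; rw [h0, mul_zero] at hne; exact hne rfl
      obtain ⟨hpr, hch⟩ := ih (Nat.succ_pos k') (fun i => g i.succ) hrest
      rw [hpr] at hne ⊢
      have hlink : (g ⟨0, hm⟩).2 = (g (Fin.succ ⟨0, Nat.succ_pos k'⟩)).1 := by
        by_contra hne2
        rw [Matrix.single_mul_single_of_ne (h := hne2)] at hne
        exact hne rfl
      constructor
      · rw [hlink, Matrix.single_mul_single_same, one_mul]
        have he : (⟨k' + 1 - 1, Nat.sub_lt (Nat.succ_pos k') Nat.one_pos⟩ : Fin (k' + 1)).succ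
            = (⟨k' + 1 + 1 - 1, Nat.sub_lt hm Nat.one_pos⟩ : Fin (k' + 2)) := by
          apply Fin.ext; simp
        rw [he]
      · intro i hi
        cases i with
        | zero => exact hlink
        | succ j => exact hch j (by omega)

end BDAux

section PairFacts

lemma pair_facts {n : ℕ} {Γ1 : Finset ℕ} {T : ℕ → ℕ}
    (hinj : Set.InjOn T ↑Γ1)
    (hnil : ∀ i ∈ Γ1, ∃ k, 1 ≤ k ∧ T^[k] i ∉ Γ1) (x : TPair n T Γ1) :
    (1 ≤ (comp1 x).1 ∧ (comp1 x).1 ≤ n) ∧ (1 ≤ (comp1 x).2 ∧ (comp1 x).2 ≤ n) ∧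
    (1 ≤ (comp2 x).1 ∧ (comp2 x).1 ≤ n) ∧ (1 ≤ (comp2 x).2 ∧ (comp2 x).2 ≤ n) ∧
    (((comp1 x).2 : ℤ) - (comp1 x).1 + (((comp2 x).2 : ℤ) - (comp2 x).1) = 0) ∧
    (0 ≤ (BDAux.psi T Γ1 (comp1 x).2 - BDAux.psi T Γ1 (comp1 x).1)
        + (BDAux.psi T Γ1 (comp2 x).2 - BDAux.psi T Γ1 (comp2 x).1)) ∧
    ((BDAux.psi T Γ1 (comp1 x).2 - BDAux.psi T Γ1 (comp1 x).1)
        + (BDAux.psi T Γ1 (comp2 x).2 - BDAux.psi T Γ1 (comp2 x).1) = 0 →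
      (comp1 x).2 < (comp1 x).1) := by
  obtain ⟨hβlt, hsz, hψ⟩ := BDAux.TIter_facts hinj hnil x.k x.hiter x.hα
  have hα := x.hα
  have hlo := x.hlo
  have hhi := x.hhi
  have hksz : 0 ≤ (x.k : ℤ) * ((x.α.2 : ℤ) - x.α.1) := by
    have : (0:ℤ) ≤ (x.k : ℤ) := Int.natCast_nonneg _
    nlinarith [show (1:ℤ) ≤ (x.α.2 : ℤ) - x.α.1 by omega]
  unfold comp1 comp2
  cases hxp : x.pos
  · simp only [Bool.false_eq_true, if_false]
    refine ⟨⟨by omega, by omega⟩, ⟨by omega, by omega⟩, ⟨by omega, by omega⟩,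
      ⟨by omega, by omega⟩, by push_cast; linarith, by push_cast; linarith, ?_⟩
    intro _
    exact hα
  · simp only [if_true]
    have hk1 : 1 ≤ x.k := x.hpos hxp
    have hstrict : (1:ℤ) ≤ (x.k : ℤ) * ((x.α.2 : ℤ) - x.α.1) := by
      have h1 : (1:ℤ) ≤ (x.k : ℤ) := by exact_mod_cast hk1
      nlinarith [show (1:ℤ) ≤ (x.α.2 : ℤ) - x.α.1 by omega]
    refine ⟨⟨by omega, by omega⟩, ⟨by omega, by omega⟩, ⟨by omega, by omega⟩,
      ⟨by omega, by omega⟩, by push_cast; linarith, by push_cast; linarith, ?_⟩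
    intro h0
    exfalso
    push_cast at h0
    linarith

end PairFacts

open Fin.NatCast in
/-- If a product `E_{x_1} ⋯ E_{x_m}` of the elementary tensors of `T`-pairs is
nonzero, then it equals `E_z` for a unique `z ∈ Γ̄ × Γ̄`, namely the componentwise sum
of the `x_i` (given by chaining endpoints); in particular the componentwise sum is
never `(0,0)`, so the product is never of the form `e_{ii} ⊗ e_{jj}`. -/
theorem prod_of_tpairs (n m : ℕ) (hm : 0 < m) (Γ1 Γ2 : Finset ℕ) (T : ℕ → ℕ)
    (h : BDTriple n Γ1 Γ2 T) (x : Fin m → TPair n T Γ1)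
    (hprod : (List.ofFn fun i => Epair (x i)).prod ≠ 0) :
    let z1 : ℕ × ℕ := ((comp1 (x ⟨0, hm⟩)).1, (comp1 (x ⟨m - 1, Nat.sub_lt hm Nat.one_pos⟩)).2)
    let z2 : ℕ × ℕ := ((comp2 (x ⟨0, hm⟩)).1, (comp2 (x ⟨m - 1, Nat.sub_lt hm Nat.one_pos⟩)).2)
    (List.ofFn fun i => Epair (x i)).prod = Eroot n z1 ⊗ₖ Eroot n z2 ∧
      z1.1 ≠ z1.2 ∧ z2.1 ≠ z2.2 ∧
      (∀ w1 w2 : ℕ × ℕ, w1.1 ∈ Finset.Icc 1 n → w1.2 ∈ Finset.Icc 1 n →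
        w2.1 ∈ Finset.Icc 1 n → w2.2 ∈ Finset.Icc 1 n →
        (List.ofFn fun i => Epair (x i)).prod = Eroot n w1 ⊗ₖ Eroot n w2 →
        w1 = z1 ∧ w2 = z2) := by
  intro z1 z2
  obtain ⟨hG1, hG2, hbij, hadj, hnil⟩ := h
  have hinj := hbij.injOn
  set g1 : Fin m → Fin (n + 1) × Fin (n + 1) :=
    fun i => (((comp1 (x i)).1 : Fin (n + 1)), ((comp1 (x i)).2 : Fin (n + 1))) with hg1
  set g2 : Fin m → Fin (n + 1) × Fin (n + 1) :=
    fun i => (((comp2 (x i)).1 : Fin (n + 1)), ((comp2 (x i)).2 : Fin (n + 1))) with hg2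
  have hEp : ∀ i, Epair (x i)
      = single (g1 i).1 (g1 i).2 (1 : ℂ) ⊗ₖ single (g2 i).1 (g2 i).2 1 := by
    intro i
    show Epair (x i) = Eroot n (comp1 (x i)) ⊗ₖ Eroot n (comp2 (x i))
    unfold Epair comp1 comp2
    cases hxp : (x i).pos <;> simp [hxp]
  have hlist : (List.ofFn fun i => Epair (x i))
      = List.ofFn fun i =>
          single (g1 i).1 (g1 i).2 (1 : ℂ) ⊗ₖ single (g2 i).1 (g2 i).2 1 := by
    congr 1
    funext i
    exact hEp i
  have hkron := BDAux.kron_ofFn_prod m (fun i => single (g1 i).1 (g1 i).2 (1 : ℂ))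
      (fun i => single (g2 i).1 (g2 i).2 (1 : ℂ))
  rw [hlist, hkron] at hprod
  have hA : (List.ofFn fun i => single (g1 i).1 (g1 i).2 (1 : ℂ)).prod ≠ 0 := by
    intro h0; rw [h0, Matrix.zero_kronecker] at hprod; exact hprod rfl
  have hB : (List.ofFn fun i => single (g2 i).1 (g2 i).2 (1 : ℂ)).prod ≠ 0 := by
    intro h0; rw [h0, Matrix.kronecker_zero] at hprod; exact hprod rfl
  obtain ⟨hA1, hA2⟩ := BDAux.chain_lemma m hm g1 hA
  obtain ⟨hB1, hB2⟩ := BDAux.chain_lemma m hm g2 hB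
  have hmain : (List.ofFn fun i => Epair (x i)).prod = Eroot n z1 ⊗ₖ Eroot n z2 := by
    rw [hlist, hkron, hA1, hB1]; rfl
  -- bounds
  have hbd := fun i : Fin m => pair_facts hinj hnil (x i)
  have hcastinj : ∀ a b : ℕ, a ≤ n → b ≤ n → ((a : Fin (n + 1)) = b) → a = b := by
    intro a b ha hb hab
    have := congrArg Fin.val hab
    rwa [Fin.val_cast_of_lt (by omega), Fin.val_cast_of_lt (by omega)] at this
  -- chains at ℕ level
  have hchain1 : ∀ i (hi : i + 1 < m),
      (comp1 (x ⟨i, Nat.lt_of_succ_lt hi⟩)).2 = (comp1 (x ⟨i + 1, hi⟩)).1 := by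
    intro i hi
    refine hcastinj _ _ (hbd ⟨i, Nat.lt_of_succ_lt hi⟩).2.1.2 (hbd ⟨i + 1, hi⟩).1.2 ?_
    exact hA2 i hi
  have hchain2 : ∀ i (hi : i + 1 < m),
      (comp2 (x ⟨i, Nat.lt_of_succ_lt hi⟩)).2 = (comp2 (x ⟨i + 1, hi⟩)).1 := by
    intro i hi
    refine hcastinj _ _ (hbd ⟨i, Nat.lt_of_succ_lt hi⟩).2.2.2.1.2 (hbd ⟨i + 1, hi⟩).2.2.1.2 ?_
    exact hB2 i hi
  -- endpoint sequences
  set hP : ℕ → ℕ := fun i =>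
    if hi : i < m then (comp1 (x ⟨i, hi⟩)).1
    else (comp1 (x ⟨m - 1, Nat.sub_lt hm Nat.one_pos⟩)).2 with hPdef
  set hQ : ℕ → ℕ := fun i =>
    if hi : i < m then (comp2 (x ⟨i, hi⟩)).1
    else (comp2 (x ⟨m - 1, Nat.sub_lt hm Nat.one_pos⟩)).2 with hQdef
  have hPat : ∀ i (hi : i < m), hP i = (comp1 (x ⟨i, hi⟩)).1 := by
    intro i hi; simp only [hPdef, dif_pos hi]
  have hQat : ∀ i (hi : i < m), hQ i = (comp2 (x ⟨i, hi⟩)).1 := by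
    intro i hi; simp only [hQdef, dif_pos hi]
  have hPsucc : ∀ i (hi : i < m), hP (i + 1) = (comp1 (x ⟨i, hi⟩)).2 := by
    intro i hi
    by_cases hi1 : i + 1 < m
    · rw [hPat (i + 1) hi1]; exact (hchain1 i hi1).symm
    · have him : i = m - 1 := by omega
      simp only [hPdef, dif_neg hi1]
      have he : (⟨m - 1, Nat.sub_lt hm Nat.one_pos⟩ : Fin m) = ⟨i, hi⟩ := by
        apply Fin.ext
        show m - 1 = i
        omega
      rw [he]
  have hQsucc : ∀ i (hi : i < m), hQ (i + 1) = (comp2 (x ⟨i, hi⟩)).2 := by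
    intro i hi
    by_cases hi1 : i + 1 < m
    · rw [hQat (i + 1) hi1]; exact (hchain2 i hi1).symm
    · have him : i = m - 1 := by omega
      simp only [hQdef, dif_neg hi1]
      have he : (⟨m - 1, Nat.sub_lt hm Nat.one_pos⟩ : Fin m) = ⟨i, hi⟩ := by
        apply Fin.ext
        show m - 1 = i
        omega
      rw [he]
  -- telescopes
  have tP : ∑ i ∈ Finset.range m, (((hP (i + 1) : ℤ)) - hP i) = (hP m : ℤ) - hP 0 :=
    Finset.sum_range_sub (fun i => (hP i : ℤ)) m
  have tQ : ∑ i ∈ Finset.range m, (((hQ (i + 1) : ℤ)) - hQ i) = (hQ m : ℤ) - hQ 0 :=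
    Finset.sum_range_sub (fun i => (hQ i : ℤ)) m
  have tψP : ∑ i ∈ Finset.range m,
      (BDAux.psi T Γ1 (hP (i + 1)) - BDAux.psi T Γ1 (hP i))
      = BDAux.psi T Γ1 (hP m) - BDAux.psi T Γ1 (hP 0) :=
    Finset.sum_range_sub (fun i => BDAux.psi T Γ1 (hP i)) m
  have tψQ : ∑ i ∈ Finset.range m,
      (BDAux.psi T Γ1 (hQ (i + 1)) - BDAux.psi T Γ1 (hQ i))
      = BDAux.psi T Γ1 (hQ m) - BDAux.psi T Γ1 (hQ 0) :=
    Finset.sum_range_sub (fun i => BDAux.psi T Γ1 (hQ i)) m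
  -- per-index facts
  have hD : ∀ i ∈ Finset.range m,
      ((hP (i + 1) : ℤ) - hP i) + ((hQ (i + 1) : ℤ) - hQ i) = 0 := by
    intro i hi'
    have hi : i < m := Finset.mem_range.mp hi'
    rw [hPat i hi, hQat i hi, hPsucc i hi, hQsucc i hi]
    exact (hbd ⟨i, hi⟩).2.2.2.2.1
  have hGnn : ∀ i ∈ Finset.range m,
      0 ≤ (BDAux.psi T Γ1 (hP (i + 1)) - BDAux.psi T Γ1 (hP i))
        + (BDAux.psi T Γ1 (hQ (i + 1)) - BDAux.psi T Γ1 (hQ i)) := by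
    intro i hi'
    have hi : i < m := Finset.mem_range.mp hi'
    rw [hPat i hi, hQat i hi, hPsucc i hi, hQsucc i hi]
    exact (hbd ⟨i, hi⟩).2.2.2.2.2.1
  have hGzero : ∀ i ∈ Finset.range m,
      ((BDAux.psi T Γ1 (hP (i + 1)) - BDAux.psi T Γ1 (hP i))
        + (BDAux.psi T Γ1 (hQ (i + 1)) - BDAux.psi T Γ1 (hQ i)) = 0)
      → hP (i + 1) < hP i := by
    intro i hi' h0
    have hi : i < m := Finset.mem_range.mp hi'
    rw [hPat i hi, hPsucc i hi]
    rw [hPat i hi, hQat i hi, hPsucc i hi, hQsucc i hi] at h0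
    exact (hbd ⟨i, hi⟩).2.2.2.2.2.2 h0
  have hDsum : ((hP m : ℤ) - hP 0) + ((hQ m : ℤ) - hQ 0) = 0 := by
    rw [← tP, ← tQ, ← Finset.sum_add_distrib]
    exact Finset.sum_eq_zero hD
  -- the key impossibility
  have key : hP m = hP 0 → False := by
    intro h0
    have hQ0 : (hQ m : ℤ) = hQ 0 := by rw [h0] at hDsum; omega
    have hQ0' : hQ m = hQ 0 := by exact_mod_cast hQ0
    have hsumG : ∑ i ∈ Finset.range m,
        ((BDAux.psi T Γ1 (hP (i + 1)) - BDAux.psi T Γ1 (hP i))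
          + (BDAux.psi T Γ1 (hQ (i + 1)) - BDAux.psi T Γ1 (hQ i))) = 0 := by
      rw [Finset.sum_add_distrib, tψP, tψQ, h0, hQ0']
      ring
    have hall := (Finset.sum_eq_zero_iff_of_nonneg hGnn).mp hsumG
    have hdec : ∀ i ∈ Finset.range m, ((hP (i + 1) : ℤ)) - hP i ≤ -1 := by
      intro i hi
      have := hGzero i hi (hall i hi)
      omega
    have hle := Finset.sum_le_sum hdec
    rw [tP, h0, Finset.sum_const, Finset.card_range] at hle
    simp only [nsmul_eq_mul, mul_neg, mul_one] at hle
    omega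
  -- z endpoints as hP/hQ values
  have hz11 : z1.1 = hP 0 := (hPat 0 hm).symm
  have hz12 : z1.2 = hP m := by simp only [hPdef, dif_neg (lt_irrefl m)]; rfl
  have hz21 : z2.1 = hQ 0 := (hQat 0 hm).symm
  have hz22 : z2.2 = hQ m := by simp only [hQdef, dif_neg (lt_irrefl m)]; rfl
  have hne1 : z1.1 ≠ z1.2 := by
    intro he
    rw [hz11, hz12] at he
    exact key he.symm
  have hne2 : z2.1 ≠ z2.2 := by
    intro he
    rw [hz21, hz22] at he
    have hQ0 : (hQ m : ℤ) = hQ 0 := by exact_mod_cast he.symm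
    have : (hP m : ℤ) = hP 0 := by omega
    exact key (by exact_mod_cast this)
  refine ⟨hmain, hne1, hne2, ?_⟩
  -- uniqueness
  intro w1 w2 hw11 hw12 hw21 hw22 hw
  rw [hmain] at hw
  simp only [Finset.mem_Icc] at hw11 hw12 hw21 hw22
  have hzb1 : z1.1 ≤ n := (hbd ⟨0, hm⟩).1.2
  have hzb2 : z1.2 ≤ n := (hbd ⟨m - 1, Nat.sub_lt hm Nat.one_pos⟩).2.1.2
  have hzb3 : z2.1 ≤ n := (hbd ⟨0, hm⟩).2.2.1.2
  have hzb4 : z2.2 ≤ n := (hbd ⟨m - 1, Nat.sub_lt hm Nat.one_pos⟩).2.2.2.1.2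
  have hent := congrFun (congrFun hw (((z1.1 : Fin (n + 1)), (z2.1 : Fin (n + 1)))))
      (((z1.2 : Fin (n + 1)), (z2.2 : Fin (n + 1))))
  have hl : (Eroot n z1 ⊗ₖ Eroot n z2) ((z1.1 : Fin (n + 1)), (z2.1 : Fin (n + 1)))
      ((z1.2 : Fin (n + 1)), (z2.2 : Fin (n + 1))) = 1 := by
    show Eroot n z1 (z1.1 : Fin (n + 1)) (z1.2 : Fin (n + 1))
        * Eroot n z2 (z2.1 : Fin (n + 1)) (z2.2 : Fin (n + 1)) = 1
    unfold Eroot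
    rw [Matrix.single_apply_same, Matrix.single_apply_same, one_mul]
  rw [hl] at hent
  have hr : Eroot n w1 (z1.1 : Fin (n + 1)) (z1.2 : Fin (n + 1))
      * Eroot n w2 (z2.1 : Fin (n + 1)) (z2.2 : Fin (n + 1)) = 1 := hent.symm
  have hfac1 : Eroot n w1 (z1.1 : Fin (n + 1)) (z1.2 : Fin (n + 1)) ≠ 0 := by
    intro h0; rw [h0, zero_mul] at hr; exact one_ne_zero hr.symm
  have hfac2 : Eroot n w2 (z2.1 : Fin (n + 1)) (z2.2 : Fin (n + 1)) ≠ 0 := by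
    intro h0; rw [h0, mul_zero] at hr; exact one_ne_zero hr.symm
  have hidx : ∀ (w : ℕ × ℕ) (a b : ℕ), w.1 ≤ n → w.2 ≤ n → a ≤ n → b ≤ n →
      Eroot n w (a : Fin (n + 1)) (b : Fin (n + 1)) ≠ 0 → w = (a, b) := by
    intro w a b h1 h2 h3 h4 hne
    unfold Eroot at hne
    by_cases hh : ((w.1 : Fin (n + 1)) = (a : Fin (n + 1)) ∧ (w.2 : Fin (n + 1)) = (b : Fin (n + 1)))
    · have e1 := hcastinj _ _ h1 h3 hh.1
      have e2 := hcastinj _ _ h2 h4 hh.2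
      exact Prod.ext e1 e2
    · rw [Matrix.single_apply_of_ne _ _ _ _ _ hh] at hne
      exact absurd rfl hne
  constructor
  · exact hidx w1 z1.1 z1.2 hw11.2 hw12.2 hzb1 hzb2 hfac1
  · exact hidx w2 z2.1 z2.2 hw21.2 hw22.2 hzb3 hzb4 hfac2
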